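/- arXiv:2008.10288 — 2 statements merged into one kernel-verified Lean document; each statement's English description precedes it below -/
import Mathlib

section
/- The map L : ℍ² → 𝕆 defined by L(h₁,h₂) = h₁ + (k h₂ k̄)e is a real-linear isometry satisfying L((h₁,h₂)·i) = L(h₁,h₂)·i, L((h₁,h₂)·j) = L(h₁,h₂)·j, and L((h₁,h₂)·k) = (L(h₁,h₂)·i)·j, where on the left the quaternion acts by componentwise right multiplication. -/
noncomputable section

open Quaternion

/-- The octonions via Cayley–Dickson on ℍ: `x = h₁ + h₂e ↔ (h₁, h₂)`. -/
abbrev Oct := ℍ[ℝ] × ℍ[ℝ]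

/-- Cayley–Dickson multiplication. -/
def omul (x y : Oct) : Oct :=
  (x.1 * y.1 - star y.2 * x.2, x.2 * star y.1 + y.2 * x.1)

def qi : ℍ[ℝ] := ⟨0,1,0,0⟩
def qj : ℍ[ℝ] := ⟨0,0,1,0⟩
def qk : ℍ[ℝ] := ⟨0,0,0,1⟩

/-- The imaginary units i, j of ℍ ⊂ 𝕆. -/
def oi : Oct := (qi, 0)
def oj : Oct := (qj, 0)

/-- The Bryant–Harvey map `L(h₁,h₂) = h₁ + (k h₂ k̄)e`. -/
def Lmap (h : ℍ[ℝ] × ℍ[ℝ]) : Oct := (h.1, qk * h.2 * star qk)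

theorem qi_comps : qi.re = 0 ∧ qi.imI = 1 ∧ qi.imJ = 0 ∧ qi.imK = 0 :=
  ⟨rfl, rfl, rfl, rfl⟩

theorem qj_comps : qj.re = 0 ∧ qj.imI = 0 ∧ qj.imJ = 1 ∧ qj.imK = 0 :=
  ⟨rfl, rfl, rfl, rfl⟩

theorem qk_comps : qk.re = 0 ∧ qk.imI = 0 ∧ qk.imJ = 0 ∧ qk.imK = 1 :=
  ⟨rfl, rfl, rfl, rfl⟩

/-- `L` is a real-linear isometry of ℍ² ≅ ℝ⁸ onto 𝕆 ≅ ℝ⁸ intertwining componentwise right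
quaternion multiplication with octonion multiplication:
`L(h·i) = L(h)·i`, `L(h·j) = L(h)·j`, `L(h·k) = (L(h)·i)·j`. -/
theorem bryant_harvey_L :
    (∀ x y : ℍ[ℝ] × ℍ[ℝ], Lmap (x + y) = Lmap x + Lmap y) ∧
    (∀ (r : ℝ) (x : ℍ[ℝ] × ℍ[ℝ]), Lmap (r • x) = r • Lmap x) ∧
    (∀ x : ℍ[ℝ] × ℍ[ℝ],
      normSq (Lmap x).1 + normSq (Lmap x).2 = normSq x.1 + normSq x.2) ∧
    (∀ h : ℍ[ℝ] × ℍ[ℝ], Lmap (h.1 * qi, h.2 * qi) = omul (Lmap h) oi) ∧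
    (∀ h : ℍ[ℝ] × ℍ[ℝ], Lmap (h.1 * qj, h.2 * qj) = omul (Lmap h) oj) ∧
    (∀ h : ℍ[ℝ] × ℍ[ℝ],
      Lmap (h.1 * qk, h.2 * qk) = omul (omul (Lmap h) oi) oj) := by
  refine ⟨fun x y => ?_, fun r x => ?_, fun x => ?_, fun h => ?_, fun h => ?_, fun h => ?_⟩ <;>
    simp only [Lmap, omul, oi, oj, qi_comps, qj_comps, qk_comps, Prod.mk.injEq, Prod.ext_iff, Prod.fst_add,
      Prod.snd_add, Prod.smul_fst, Prod.smul_snd, Quaternion.ext_iff, Quaternion.re_mul,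
      Quaternion.imI_mul, Quaternion.imJ_mul, Quaternion.imK_mul, Quaternion.re_add,
      Quaternion.imI_add, Quaternion.imJ_add, Quaternion.imK_add, Quaternion.re_smul,
      Quaternion.imI_smul, Quaternion.imJ_smul, Quaternion.imK_smul, Quaternion.re_star,
      Quaternion.imI_star, Quaternion.imJ_star, Quaternion.imK_star, Quaternion.re_sub,
      Quaternion.imI_sub, Quaternion.imJ_sub, Quaternion.imK_sub, Quaternion.normSq_def',
      Prod.fst_zero, Prod.snd_zero, Quaternion.re_zero, Quaternion.imI_zero,
      Quaternion.imJ_zero, Quaternion.imK_zero, smul_eq_mul] <;>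
    norm_num <;> constructor <;> ring
end
end

section
/- The Bryant–Harvey 4-form Φ_K = -(1/2)ω_{R_i}² - (1/2)ω_{R_j}² + (1/2)ω_{R_k}² on ℍ² ≅ ℝ⁸ satisfies L*Φ_{Spin(7)} = Φ_K, where L : ℍ² → 𝕆 is the linear isomorphism L(h₁,h₂) = h₁ + (k h₂ k̄)e. -/
noncomputable section

open Quaternion

/-- The exterior algebra of (the dual of) ℝ⁸; forms on ℝ⁸ ≅ ℍ². -/
abbrev Ext8 := ExteriorAlgebra ℝ (Fin 8 → ℝ)

/-- The coordinate 1-forms (0-indexed). -/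
def dx (a : Fin 8) : Ext8 := ExteriorAlgebra.ι ℝ (Pi.single a 1)

/-- The Euclidean inner product on ℍ² ≅ ℝ⁸. -/
def ipH2 (x y : ℍ[ℝ] × ℍ[ℝ]) : ℝ :=
  (x.1 * star y.1).re + (x.2 * star y.2).re

/-- The standard orthonormal basis `1, i, j, k, e, ie, je, ke` of ℍ² ≅ ℝ⁸. -/
def qe : Fin 8 → ℍ[ℝ] × ℍ[ℝ]
  | 0 => (1, 0) | 1 => (qi, 0) | 2 => (qj, 0) | 3 => (qk, 0)
  | 4 => (0, 1) | 5 => (0, qi) | 6 => (0, qj) | 7 => (0, qk)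

/-- The Kähler 2-form `ω(X,Y) = ⟨JX,Y⟩` of an endomorphism `J` of ℍ² ≅ ℝ⁸,
as an element of the exterior algebra: `ω = Σ_{a<b} ⟨J e_a, e_b⟩ dx_a ∧ dx_b`. -/
def kform (J : ℍ[ℝ] × ℍ[ℝ] → ℍ[ℝ] × ℍ[ℝ]) : Ext8 :=
  (1/2 : ℝ) • ∑ a : Fin 8, ∑ b : Fin 8, ipH2 (J (qe a)) (qe b) • (dx a * dx b)

def w4 (a b c d : Fin 8) : Ext8 := dx a * dx b * dx c * dx d

/-- The matrix of `L` with respect to the standard bases of ℍ² and 𝕆. -/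
def Lmat : Matrix (Fin 8) (Fin 8) ℝ := fun a b => ipH2 (Lmap (qe b)) (qe a)

/-- Pullback of exterior forms along `L`: the algebra morphism induced by the
transpose (dual) of `L` on the coordinate (dual) space. -/
def Lpull : Ext8 →ₐ[ℝ] Ext8 := ExteriorAlgebra.map (Matrix.toLin' Lmat.transpose)

/-- The Cayley calibration
`Φ_{Spin(7)} = dx₁₂₃₄+dx₁₂₅₆+dx₁₃₅₇+dx₁₃₆₈-dx₁₂₇₈-dx₁₄₆₇+dx₁₄₅₈ + ⋆(same)` in the
octonion coordinates. -/
def ΦSpin7 : Ext8 :=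
  w4 0 1 2 3 + w4 0 1 4 5 + w4 0 2 4 6 + w4 0 2 5 7 - w4 0 1 6 7 - w4 0 3 5 6 + w4 0 3 4 7
  + w4 4 5 6 7 + w4 2 3 6 7 + w4 1 3 5 7 + w4 1 3 4 6 - w4 2 3 4 5 - w4 1 2 4 7 + w4 1 2 5 6

/-- Componentwise right multiplications by i, j, k on ℍ². -/
def Ri (x : ℍ[ℝ] × ℍ[ℝ]) : ℍ[ℝ] × ℍ[ℝ] := (x.1 * qi, x.2 * qi)
def Rj (x : ℍ[ℝ] × ℍ[ℝ]) : ℍ[ℝ] × ℍ[ℝ] := (x.1 * qj, x.2 * qj)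
def Rk (x : ℍ[ℝ] × ℍ[ℝ]) : ℍ[ℝ] × ℍ[ℝ] := (x.1 * qk, x.2 * qk)

/-- The Bryant–Harvey 4-form `Φ_K = -(1/2)ω_{R_i}² - (1/2)ω_{R_j}² + (1/2)ω_{R_k}²`. -/
def ΦK : Ext8 :=
  -(1/2 : ℝ) • (kform Ri)^2 - (1/2 : ℝ) • (kform Rj)^2 + (1/2 : ℝ) • (kform Rk)^2

@[simp] lemma qi_re : qi.re = 0 := rfl
@[simp] lemma qi_imI : qi.imI = 1 := rfl
@[simp] lemma qi_imJ : qi.imJ = 0 := rfl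
@[simp] lemma qi_imK : qi.imK = 0 := rfl
@[simp] lemma qj_re : qj.re = 0 := rfl
@[simp] lemma qj_imI : qj.imI = 0 := rfl
@[simp] lemma qj_imJ : qj.imJ = 1 := rfl
@[simp] lemma qj_imK : qj.imK = 0 := rfl
@[simp] lemma qk_re : qk.re = 0 := rfl
@[simp] lemma qk_imI : qk.imI = 0 := rfl
@[simp] lemma qk_imJ : qk.imJ = 0 := rfl
@[simp] lemma qk_imK : qk.imK = 1 := rfl

/- Auxiliary lemmas -/

lemma dx_sq (a : Fin 8) : dx a * dx a = 0 := ExteriorAlgebra.ι_sq_zero _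
lemma dx_swap (a b : Fin 8) : dx b * dx a = -(dx a * dx b) :=
  eq_neg_of_add_eq_zero_left (ExteriorAlgebra.ι_add_mul_swap _ _)
lemma dx_sq' (a : Fin 8) (c : Ext8) : dx a * (dx a * c) = 0 := by
  rw [← mul_assoc, dx_sq, zero_mul]
lemma dx_swap_lt (a b : Fin 8) (_h : b < a) : dx a * dx b = -(dx b * dx a) :=
  dx_swap b a
lemma dx_swap_lt' (a b : Fin 8) (c : Ext8) (_h : b < a) :
    dx a * (dx b * c) = -(dx b * (dx a * c)) := by
  rw [← mul_assoc, dx_swap b a, ← mul_assoc, neg_mul, mul_assoc]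

def sg : Fin 8 → ℝ := ![1,1,1,1,1,-1,-1,1]

set_option maxHeartbeats 1000000 in
lemma Lpull_dx (a : Fin 8) : Lpull (dx a) = sg a • dx a := by
  rw [dx, Lpull, ExteriorAlgebra.map_apply_ι, Matrix.toLin'_apply,
    Matrix.mulVec_single_one]
  change ExteriorAlgebra.ι ℝ (Lmat a) = _
  have : Lmat a = (Pi.single a (sg a) : Fin 8 → ℝ) := by
    funext i
    fin_cases a <;> fin_cases i <;>
      norm_num [Lmat, Lmap, ipH2, qe, sg, Quaternion.ext_iff,
        Pi.single_apply, Fin.ext_iff, Quaternion.re_mul, Quaternion.imI_mul,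
        Quaternion.imJ_mul, Quaternion.imK_mul, Quaternion.re_star]
  rw [this, ← map_smul]
  congr 1
  funext j
  simp only [Pi.single_apply, Pi.smul_apply, smul_eq_mul]
  split_ifs <;> simp

set_option maxHeartbeats 1000000 in
lemma kRi : kform Ri = dx 0 * dx 1 - dx 2 * dx 3 + dx 4 * dx 5 - dx 6 * dx 7 := by
  simp only [kform, Fin.sum_univ_eight, Ri, qe, ipH2]
  norm_num [Quaternion.ext_iff, dx_sq, Quaternion.re_mul, Quaternion.imI_mul, Quaternion.imJ_mul,
    Quaternion.imK_mul, Quaternion.re_star, Quaternion.imI_star,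
    Quaternion.imJ_star, Quaternion.imK_star]
  rw [dx_swap 0 1, dx_swap 2 3, dx_swap 4 5, dx_swap 6 7]
  module

set_option maxHeartbeats 1000000 in
lemma kRj : kform Rj = dx 0 * dx 2 + dx 1 * dx 3 + dx 4 * dx 6 + dx 5 * dx 7 := by
  simp only [kform, Fin.sum_univ_eight, Rj, qe, ipH2]
  norm_num [Quaternion.ext_iff, dx_sq, Quaternion.re_mul, Quaternion.imI_mul, Quaternion.imJ_mul,
    Quaternion.imK_mul, Quaternion.re_star, Quaternion.imI_star,
    Quaternion.imJ_star, Quaternion.imK_star]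
  rw [dx_swap 0 2, dx_swap 1 3, dx_swap 4 6, dx_swap 5 7]
  module

set_option maxHeartbeats 1000000 in
lemma kRk : kform Rk = dx 0 * dx 3 - dx 1 * dx 2 + dx 4 * dx 7 - dx 5 * dx 6 := by
  simp only [kform, Fin.sum_univ_eight, Rk, qe, ipH2]
  norm_num [Quaternion.ext_iff, dx_sq, Quaternion.re_mul, Quaternion.imI_mul, Quaternion.imJ_mul,
    Quaternion.imK_mul, Quaternion.re_star, Quaternion.imI_star,
    Quaternion.imJ_star, Quaternion.imK_star]
  rw [dx_swap 0 3, dx_swap 1 2, dx_swap 4 7, dx_swap 5 6]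
  module

lemma sg0 : Lpull (dx 0) = dx 0 := by rw [Lpull_dx]; norm_num [sg]
lemma sg1 : Lpull (dx 1) = dx 1 := by rw [Lpull_dx]; norm_num [sg]
lemma sg2 : Lpull (dx 2) = dx 2 := by rw [Lpull_dx, show sg 2 = 1 from rfl]; norm_num [sg]
lemma sg3 : Lpull (dx 3) = dx 3 := by rw [Lpull_dx, show sg 3 = 1 from rfl]; norm_num [sg]
lemma sg4 : Lpull (dx 4) = dx 4 := by rw [Lpull_dx, show sg 4 = 1 from rfl]; norm_num [sg]
lemma sg5 : Lpull (dx 5) = -dx 5 := by rw [Lpull_dx, show sg 5 = -1 from rfl]; module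
lemma sg6 : Lpull (dx 6) = -dx 6 := by rw [Lpull_dx, show sg 6 = -1 from rfl]; module
lemma sg7 : Lpull (dx 7) = dx 7 := by rw [Lpull_dx, show sg 7 = 1 from rfl]; module

set_option maxHeartbeats 4000000 in
/-- `L*Φ_{Spin(7)} = Φ_K`. -/
theorem bryant_harvey_pullback : Lpull ΦSpin7 = ΦK := by
  rw [ΦK, kRi, kRj, kRk]
  simp only [ΦSpin7, w4, map_add, map_sub, map_mul, sg0, sg1, sg2, sg3, sg4, sg5, sg6, sg7]
  simp (config := { decide := true }) only [pow_two, mul_add, add_mul, mul_sub, sub_mul,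
    mul_neg, neg_mul, neg_neg, mul_assoc, dx_sq, dx_sq', dx_swap_lt, dx_swap_lt',
    mul_zero, zero_mul, add_zero, zero_add, neg_zero, smul_neg, smul_zero, sub_zero, zero_sub]
  module
end
end
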